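/- Let A be a Hopf algebra over a commutative ring R with antipode S, and let w ∈ A* be a normalized left integral on A. Then: (i) w is also a normalized right integral (hence a normalized two-sided integral); (ii) w is the unique normalized left integral on A; and (iii) w ∘ S = w. -/

import Mathlib

/-- The convolution product on the dual `A* = Hom_R(A, R)` of a bialgebra `A`:
`(f * g)(a) = Σ f(a₍₁₎) · g(a₍₂₎)`. -/
noncomputable def conv {R A : Type*} [CommRing R] [Ring A] [Bialgebra R A]
    (f g : Module.Dual R A) : Module.Dual R A :=
  LinearMap.mul' R R ∘ₗ TensorProduct.map f g ∘ₗ Coalgebra.comul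

/-- A normalized left integral on a bialgebra `A`: an element `w ∈ A*` with
`f * w = f(1) • w` for all `f ∈ A*` and `w(1) = 1`. -/
def IsNormalizedLeftIntegral {R A : Type*} [CommRing R] [Ring A] [Bialgebra R A]
    (w : Module.Dual R A) : Prop :=
  (∀ f : Module.Dual R A, conv f w = f 1 • w) ∧ w 1 = 1

/-- A normalized right integral on a bialgebra `A`: an element `w ∈ A*` with
`w * f = f(1) • w` for all `f ∈ A*` and `w(1) = 1`. -/
def IsNormalizedRightIntegral {R A : Type*} [CommRing R] [Ring A] [Bialgebra R A]
    (w : Module.Dual R A) : Prop :=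
  (∀ f : Module.Dual R A, conv w f = f 1 • w) ∧ w 1 = 1

/-- A normalized two-sided integral on a bialgebra `A`. -/
def IsNormalizedIntegral {R A : Type*} [CommRing R] [Ring A] [Bialgebra R A]
    (w : Module.Dual R A) : Prop :=
  (∀ f : Module.Dual R A, conv f w = f 1 • w) ∧
  (∀ f : Module.Dual R A, conv w f = f 1 • w) ∧
  w 1 = 1


open TensorProduct Coalgebra LinearMap

namespace LeftIntegralHopfAux

noncomputable section

variable {R A : Type*} [CommRing R] [Ring A] [HopfAlgebra R A]

local notation "S'" => (HopfAlgebra.antipode R : A →ₗ[R] A)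
local notation "Δ" => (Coalgebra.comul : A →ₗ[R] A ⊗[R] A)
local notation "ε" => (Coalgebra.counit : A →ₗ[R] R)

lemma sum_counit_smul {a : A} {ι : Type*} (r : Coalgebra.Repr R a ι) :
    ∑ i ∈ r.index, ε (r.left i) • r.right i = a := by
  have h := congrArg (TensorProduct.lid R A) (Coalgebra.sum_counit_tmul_eq r)
  rw [map_sum] at h
  simp only [TensorProduct.lid_tmul, one_smul] at h
  exact h

lemma sum_smul_counit {a : A} {ι : Type*} (r : Coalgebra.Repr R a ι) :
    ∑ i ∈ r.index, ε (r.right i) • r.left i = a := by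
  have h := congrArg (TensorProduct.rid R A) (Coalgebra.sum_tmul_counit_eq r)
  rw [map_sum] at h
  simp only [TensorProduct.rid_tmul, one_smul] at h
  exact h

lemma antipode_one : S' (1 : A) = 1 := by
  have h := HopfAlgebra.mul_antipode_rTensor_comul_apply (R := R) (a := (1 : A))
  simpa [Bialgebra.comul_one, Algebra.TensorProduct.one_def] using h

/-- Convolution product on `Hom(A, A ⊗ A)`. -/
def conv2 (F G : A →ₗ[R] A ⊗[R] A) : A →ₗ[R] A ⊗[R] A :=
  LinearMap.mul' R (A ⊗[R] A) ∘ₗ TensorProduct.map F G ∘ₗ Coalgebra.comul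

lemma conv2_repr (F G : A →ₗ[R] A ⊗[R] A) {a : A} {ι : Type*} (r : Coalgebra.Repr R a ι) :
    conv2 F G a = ∑ i ∈ r.index, F (r.left i) * G (r.right i) := by
  simp only [conv2, LinearMap.comp_apply, ← r.eq, map_sum, TensorProduct.map_tmul,
    LinearMap.mul'_apply]

/-- unit for conv2 -/
def cunit : A →ₗ[R] A ⊗[R] A := Algebra.linearMap R (A ⊗[R] A) ∘ₗ Coalgebra.counit

lemma cunit_apply (a : A) : (cunit : A →ₗ[R] A ⊗[R] A) a = algebraMap R (A ⊗[R] A) (ε a) := rfl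

lemma conv2_cunit_left (F : A →ₗ[R] A ⊗[R] A) : conv2 cunit F = F := by
  ext a
  rw [conv2_repr _ _ (ℛ R a)]
  calc ∑ i ∈ (ℛ R a).index, cunit ((ℛ R a).left i) * F ((ℛ R a).right i)
      = ∑ i ∈ (ℛ R a).index, F (ε ((ℛ R a).left i) • (ℛ R a).right i) := by
        refine Finset.sum_congr rfl fun i _ => ?_
        rw [cunit_apply, ← Algebra.smul_def, map_smul]
    _ = F a := by rw [← map_sum, sum_counit_smul]

lemma conv2_cunit_right (F : A →ₗ[R] A ⊗[R] A) : conv2 F cunit = F := by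
  ext a
  rw [conv2_repr _ _ (ℛ R a)]
  calc ∑ i ∈ (ℛ R a).index, F ((ℛ R a).left i) * cunit ((ℛ R a).right i)
      = ∑ i ∈ (ℛ R a).index, F (ε ((ℛ R a).right i) • (ℛ R a).left i) := by
        refine Finset.sum_congr rfl fun i _ => ?_
        rw [cunit_apply, ← Algebra.commutes, ← Algebra.smul_def, map_smul]
    _ = F a := by rw [← map_sum, sum_smul_counit]

lemma conv2_assoc (F G H : A →ₗ[R] A ⊗[R] A) :
    conv2 (conv2 F G) H = conv2 F (conv2 G H) := by
  ext a
  set r := ℛ R a with hr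
  have a₁ : (i : r.ι) → Coalgebra.Repr R (r.left i) (A × A) := fun i => ℛ R (r.left i)
  have a₂ : (i : r.ι) → Coalgebra.Repr R (r.right i) (A × A) := fun i => ℛ R (r.right i)
  have key := congrArg
    (⇑(LinearMap.mul' R (A ⊗[R] A) ∘ₗ
        LinearMap.lTensor (A ⊗[R] A) (LinearMap.mul' R (A ⊗[R] A))))
    (Coalgebra.sum_map_tmul_tmul_eq (F := A →ₗ[R] A ⊗[R] A) F G H a
      (repr := r) (a₁ := a₁) (a₂ := a₂))
  simp only [map_sum, LinearMap.comp_apply, LinearMap.lTensor_tmul,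
    LinearMap.mul'_apply] at key
  rw [conv2_repr _ _ r, conv2_repr _ _ r]
  calc ∑ i ∈ r.index, conv2 F G (r.left i) * H (r.right i)
      = ∑ i ∈ r.index, ∑ j ∈ (a₁ i).index,
          F ((a₁ i).left j) * (G ((a₁ i).right j) * H (r.right i)) := by
        refine Finset.sum_congr rfl fun i _ => ?_
        rw [conv2_repr _ _ (a₁ i), Finset.sum_mul]
        exact Finset.sum_congr rfl fun j _ => mul_assoc _ _ _
    _ = ∑ i ∈ r.index, ∑ j ∈ (a₂ i).index,
          F (r.left i) * (G ((a₂ i).left j) * H ((a₂ i).right j)) := key.symm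
    _ = ∑ i ∈ r.index, F (r.left i) * conv2 G H (r.right i) := by
        refine Finset.sum_congr rfl fun i _ => ?_
        rw [conv2_repr _ _ (a₂ i), Finset.mul_sum]

lemma conv2_comul_comulS : conv2 Δ (Δ ∘ₗ S') = (cunit : A →ₗ[R] A ⊗[R] A) := by
  ext a
  rw [conv2_repr _ _ (ℛ R a), cunit_apply]
  calc ∑ i ∈ (ℛ R a).index, Δ ((ℛ R a).left i) * (Δ ∘ₗ S') ((ℛ R a).right i)
      = Δ (∑ i ∈ (ℛ R a).index, (ℛ R a).left i * S' ((ℛ R a).right i)) := by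
        rw [map_sum]
        exact Finset.sum_congr rfl fun i _ => by
          rw [LinearMap.comp_apply, ← Bialgebra.comul_mul]
    _ = algebraMap R (A ⊗[R] A) (ε a) := by
        rw [HopfAlgebra.sum_mul_antipode_eq_algebraMap_counit, Bialgebra.comul_algebraMap]

/-- the reversed-antipode candidate for `Δ ∘ S`. -/
def Gmap : A →ₗ[R] A ⊗[R] A :=
  (TensorProduct.comm R A A).toLinearMap ∘ₗ TensorProduct.map S' S' ∘ₗ Coalgebra.comul

lemma Gmap_repr {a : A} {ι : Type*} (r : Coalgebra.Repr R a ι) :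
    (Gmap : A →ₗ[R] A ⊗[R] A) a
      = ∑ i ∈ r.index, S' (r.right i) ⊗ₜ[R] S' (r.left i) := by
  simp only [Gmap, LinearMap.comp_apply, ← r.eq, map_sum, TensorProduct.map_tmul,
    LinearEquiv.coe_coe, TensorProduct.comm_tmul]

/-- key collapsing lemma: `∑ (S b₁ ⊗ c) * Δ b₂ = 1 ⊗ (c * b)`. -/
lemma aux1 (c b : A) {ι : Type*} (s : Coalgebra.Repr R b ι) :
    ∑ k ∈ s.index, (S' (s.left k) ⊗ₜ[R] c) * Δ (s.right k) = (1 : A) ⊗ₜ[R] (c * b) := by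
  have t₁ : (k : s.ι) → Coalgebra.Repr R (s.left k) (A × A) := fun k => ℛ R (s.left k)
  have t₂ : (k : s.ι) → Coalgebra.Repr R (s.right k) (A × A) := fun k => ℛ R (s.right k)
  have key := congrArg
    (⇑(TensorProduct.map (LinearMap.mul' R A ∘ₗ LinearMap.rTensor A S')
        (LinearMap.mulLeft R c) ∘ₗ (TensorProduct.assoc R A A A).symm.toLinearMap))
    (Coalgebra.sum_tmul_tmul_eq s t₁ t₂)
  simp only [map_sum, LinearMap.comp_apply, LinearEquiv.coe_coe,
    TensorProduct.assoc_symm_tmul, TensorProduct.map_tmul, LinearMap.rTensor_tmul,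
    LinearMap.mul'_apply, LinearMap.mulLeft_apply] at key
  calc ∑ k ∈ s.index, (S' (s.left k) ⊗ₜ[R] c) * Δ (s.right k)
      = ∑ k ∈ s.index, ∑ l ∈ (t₂ k).index,
          (S' (s.left k) * (t₂ k).left l) ⊗ₜ[R] (c * (t₂ k).right l) := by
        refine Finset.sum_congr rfl fun k _ => ?_
        rw [← (t₂ k).eq, Finset.mul_sum]
        exact Finset.sum_congr rfl fun l _ => Algebra.TensorProduct.tmul_mul_tmul _ _ _ _
    _ = ∑ k ∈ s.index, ∑ j ∈ (t₁ k).index,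
          (S' ((t₁ k).left j) * (t₁ k).right j) ⊗ₜ[R] (c * s.right k) := key.symm
    _ = ∑ k ∈ s.index, (1 : A) ⊗ₜ[R] (c * (ε (s.left k) • s.right k)) := by
        refine Finset.sum_congr rfl fun k _ => ?_
        rw [← TensorProduct.sum_tmul, HopfAlgebra.sum_antipode_mul_eq_algebraMap_counit (t₁ k),
          Algebra.algebraMap_eq_smul_one, TensorProduct.smul_tmul, mul_smul_comm]
    _ = (1 : A) ⊗ₜ[R] (c * b) := by
        rw [← TensorProduct.tmul_sum, ← Finset.mul_sum, sum_counit_smul s]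

lemma conv2_G_comul : conv2 Gmap Δ = (cunit : A →ₗ[R] A ⊗[R] A) := by
  ext a
  set r := ℛ R a with hr
  have a₁ : (i : r.ι) → Coalgebra.Repr R (r.left i) (A × A) := fun i => ℛ R (r.left i)
  have a₂ : (i : r.ι) → Coalgebra.Repr R (r.right i) (A × A) := fun i => ℛ R (r.right i)
  -- Ξ (u ⊗ (v ⊗ b)) = (S v ⊗ S u) * Δ b
  have key := congrArg
    (⇑(LinearMap.mul' R (A ⊗[R] A) ∘ₗ
        TensorProduct.map
          ((TensorProduct.comm R A A).toLinearMap ∘ₗ TensorProduct.map S' S')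
          Coalgebra.comul
        ∘ₗ (TensorProduct.assoc R A A A).symm.toLinearMap))
    (Coalgebra.sum_tmul_tmul_eq r a₁ a₂)
  simp only [map_sum, LinearMap.comp_apply, LinearEquiv.coe_coe,
    TensorProduct.assoc_symm_tmul, TensorProduct.map_tmul, TensorProduct.comm_tmul,
    LinearMap.mul'_apply] at key
  -- key : ∑ i ∑ j (S v ⊗ S u) * Δ (r.right i) = ∑ i ∑ k (S p ⊗ S aᵢ) * Δ q
  rw [conv2_repr _ _ r, cunit_apply]
  calc ∑ i ∈ r.index, Gmap (r.left i) * Δ (r.right i)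
      = ∑ i ∈ r.index, ∑ j ∈ (a₁ i).index,
          (S' ((a₁ i).right j) ⊗ₜ[R] S' ((a₁ i).left j)) * Δ (r.right i) := by
        refine Finset.sum_congr rfl fun i _ => ?_
        rw [Gmap_repr (a₁ i), Finset.sum_mul]
    _ = ∑ i ∈ r.index, ∑ k ∈ (a₂ i).index,
          (S' ((a₂ i).left k) ⊗ₜ[R] S' (r.left i)) * Δ ((a₂ i).right k) := key
    _ = ∑ i ∈ r.index, (1 : A) ⊗ₜ[R] (S' (r.left i) * r.right i) := by
        exact Finset.sum_congr rfl fun i _ => aux1 (S' (r.left i)) (r.right i) (a₂ i)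
    _ = algebraMap R (A ⊗[R] A) (ε a) := by
        rw [← TensorProduct.tmul_sum, HopfAlgebra.sum_antipode_mul_eq_algebraMap_counit r,
          Algebra.TensorProduct.algebraMap_apply]
        simp [Algebra.algebraMap_eq_smul_one, TensorProduct.smul_tmul]

/-- Anti-comultiplicativity of the antipode. -/
lemma comul_antipode : (Δ ∘ₗ S' : A →ₗ[R] A ⊗[R] A) = Gmap := by
  calc (Δ ∘ₗ S' : A →ₗ[R] A ⊗[R] A)
      = conv2 cunit (Δ ∘ₗ S') := (conv2_cunit_left _).symm
    _ = conv2 (conv2 Gmap Δ) (Δ ∘ₗ S') := by rw [conv2_G_comul]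
    _ = conv2 Gmap (conv2 Δ (Δ ∘ₗ S')) := conv2_assoc _ _ _
    _ = conv2 Gmap cunit := by rw [conv2_comul_comulS]
    _ = Gmap := conv2_cunit_right _

/-- A representation of `comul (S a)` from one of `comul a`. -/
def reprAntipode {a : A} {ι : Type*} (r : Coalgebra.Repr R a ι) : Coalgebra.Repr R (S' a) ι where
  index := r.index
  left := fun i => S' (r.right i)
  right := fun i => S' (r.left i)
  eq := by
    have h := LinearMap.congr_fun (comul_antipode (R := R) (A := A)) a
    simp only [LinearMap.comp_apply] at h
    rw [h, Gmap_repr r]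
@[simp] lemma reprAntipode_index {a : A} {ι : Type*} (r : Coalgebra.Repr R a ι) :
    (reprAntipode r).index = r.index := rfl
@[simp] lemma reprAntipode_left {a : A} {ι : Type*} (r : Coalgebra.Repr R a ι) (i : r.ι) :
    (reprAntipode r).left i = S' (r.right i) := rfl
@[simp] lemma reprAntipode_right {a : A} {ι : Type*} (r : Coalgebra.Repr R a ι) (i : r.ι) :
    (reprAntipode r).right i = S' (r.left i) := rfl

lemma conv_repr (f g : Module.Dual R A) {a : A} {ι : Type*} (r : Coalgebra.Repr R a ι) :
    conv f g a = ∑ i ∈ r.index, f (r.left i) * g (r.right i) := by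
  simp only [conv, LinearMap.comp_apply, ← r.eq, map_sum, TensorProduct.map_tmul,
    LinearMap.mul'_apply]

/-- The central lemma: if `w` is a left integral then `w ∘ S` is a right integral. -/
lemma sigma_right (w : Module.Dual R A)
    (hL : ∀ f : Module.Dual R A, conv f w = f 1 • w) (f : Module.Dual R A) :
    conv (w ∘ₗ S') f = f 1 • (w ∘ₗ S') := by
  ext x
  set r := ℛ R x with hr
  have a₁ : (i : r.ι) → Coalgebra.Repr R (r.left i) (A × A) := fun i => ℛ R (r.left i)
  have a₂ : (i : r.ι) → Coalgebra.Repr R (r.right i) (A × A) := fun i => ℛ R (r.right i)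
  -- Ψ (u ⊗ (v ⊗ b)) = w (S u) * f (S v * b), applied to coassociativity
  have key := congrArg
    (⇑(LinearMap.mul' R R ∘ₗ
        TensorProduct.map (w ∘ₗ S') (f ∘ₗ LinearMap.mul' R A ∘ₗ LinearMap.rTensor A S')))
    (Coalgebra.sum_tmul_tmul_eq r a₁ a₂)
  simp only [map_sum, LinearMap.comp_apply, TensorProduct.map_tmul,
    LinearMap.rTensor_tmul, LinearMap.mul'_apply] at key
  have claim1 : ∀ i ∈ r.index,
      ∑ j ∈ (a₁ i).index,
        w (S' ((a₁ i).left j)) * f (S' ((a₁ i).right j) * r.right i)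
      = w (S' (r.left i)) * f (r.right i) := by
    intro i _
    have h := LinearMap.congr_fun
      (hL (f ∘ₗ LinearMap.mulRight R (r.right i))) (S' (r.left i))
    rw [conv_repr _ _ (reprAntipode (a₁ i))] at h
    simp only [reprAntipode_index, reprAntipode_left, reprAntipode_right,
      LinearMap.comp_apply, LinearMap.mulRight_apply, LinearMap.smul_apply,
      smul_eq_mul, one_mul] at h
    calc ∑ j ∈ (a₁ i).index,
          w (S' ((a₁ i).left j)) * f (S' ((a₁ i).right j) * r.right i)
        = ∑ j ∈ (a₁ i).index,
            f (S' ((a₁ i).right j) * r.right i) * w (S' ((a₁ i).left j)) :=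
          Finset.sum_congr rfl fun j _ => mul_comm _ _
      _ = f (r.right i) * w (S' (r.left i)) := h
      _ = w (S' (r.left i)) * f (r.right i) := mul_comm _ _
  have claim2 : ∀ i ∈ r.index,
      ∑ k ∈ (a₂ i).index,
        w (S' (r.left i)) * f (S' ((a₂ i).left k) * (a₂ i).right k)
      = (ε (r.right i) * f 1) * w (S' (r.left i)) := by
    intro i _
    rw [← Finset.mul_sum]
    have h2 : ∑ k ∈ (a₂ i).index, f (S' ((a₂ i).left k) * (a₂ i).right k)
        = ε (r.right i) * f 1 := by
      rw [← map_sum, HopfAlgebra.sum_antipode_mul_eq_algebraMap_counit (a₂ i),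
        Algebra.algebraMap_eq_smul_one, map_smul, smul_eq_mul]
    rw [h2, mul_comm]
  have lhs : conv (w ∘ₗ S') f x = ∑ i ∈ r.index, w (S' (r.left i)) * f (r.right i) := by
    rw [conv_repr _ _ r]
    exact Finset.sum_congr rfl fun i _ => by rw [LinearMap.comp_apply]
  rw [lhs, ← Finset.sum_congr rfl claim1, key, Finset.sum_congr rfl claim2]
  have final : ∑ i ∈ r.index, (ε (r.right i) * f 1) * w (S' (r.left i))
      = f 1 * w (S' x) := by
    calc ∑ i ∈ r.index, (ε (r.right i) * f 1) * w (S' (r.left i))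
        = f 1 * ∑ i ∈ r.index, w (S' (ε (r.right i) • r.left i)) := by
          rw [Finset.mul_sum]
          refine Finset.sum_congr rfl fun i _ => ?_
          rw [map_smul, map_smul, smul_eq_mul]; ring
      _ = f 1 * w (S' x) := by rw [← map_sum, ← map_sum, sum_smul_counit r]
  rw [final, LinearMap.smul_apply, LinearMap.comp_apply, smul_eq_mul]

end

end LeftIntegralHopfAux

open LeftIntegralHopfAux in
theorem left_integral_hopf {R A : Type*} [CommRing R] [Ring A] [HopfAlgebra R A]
    (w : Module.Dual R A) (hw : IsNormalizedLeftIntegral w) :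
    IsNormalizedRightIntegral w ∧
    (∀ w' : Module.Dual R A, IsNormalizedLeftIntegral w' → w' = w) ∧
    w ∘ₗ HopfAlgebra.antipode (R := R) = w := by
  obtain ⟨hL, h1⟩ := hw
  set S' : A →ₗ[R] A := HopfAlgebra.antipode (R := R)
  have hσ1 : (w ∘ₗ S') 1 = 1 := by
    rw [LinearMap.comp_apply]
    show w (HopfAlgebra.antipode R (1 : A)) = 1
    rw [LeftIntegralHopfAux.antipode_one, h1]
  have hσR : ∀ f : Module.Dual R A, conv (w ∘ₗ S') f = f 1 • (w ∘ₗ S') :=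
    sigma_right w hL
  have hσw : w ∘ₗ S' = w := by
    have e1 : conv (w ∘ₗ S') w = w := by rw [hL (w ∘ₗ S'), hσ1, one_smul]
    have e2 : conv (w ∘ₗ S') w = w ∘ₗ S' := by rw [hσR w, h1, one_smul]
    rw [← e2, e1]
  have hR : ∀ f : Module.Dual R A, conv w f = f 1 • w := by
    intro f
    have := hσR f
    rwa [hσw] at this
  refine ⟨⟨hR, h1⟩, ?_, hσw⟩
  rintro w' ⟨hL', h1'⟩
  have e1 : conv w w' = w' := by rw [hL' w, h1, one_smul]
  have e2 : conv w w' = w := by rw [hR w', h1', one_smul]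
  rw [← e1, e2]
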